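/- arXiv:2103.06095 — 3 statements merged into one kernel-verified Lean document; each statement's English description precedes it below -/
import Mathlib

section
/- Let G be a finitely generated group and N ≤ Z(G) a central subgroup such that G/N is finitely presented. Then N is finitely generated. -/
/-- A group is finitely presented if it is isomorphic to a presented group with
finitely many generators and finitely many relations. -/
def FinitelyPresentedGroup (Q : Type*) [Group Q] : Prop :=
  ∃ (n : ℕ) (rels : Finset (FreeGroup (Fin n))),
    Nonempty (PresentedGroup ((rels : Set (FreeGroup (Fin n)))) ≃* Q)

/-- If `G` is finitely generated, `N ≤ Z(G)` is central, and `G/N` is finitely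
presented, then `N` is finitely generated. -/
theorem stmt5 {G : Type*} [Group G] (hG : Group.FG G) (N : Subgroup G) [N.Normal]
    (hN : N ≤ Subgroup.center G) (hQ : FinitelyPresentedGroup (G ⧸ N)) : N.FG := by
  classical
  obtain ⟨S, hS, hSfin⟩ := Group.fg_iff.mp hG
  have : Finite S := hSfin.to_subtype
  obtain ⟨n, rels, ⟨e⟩⟩ := hQ
  set Q := G ⧸ N
  let π : G →* Q := QuotientGroup.mk' N
  -- surjection from a finitely generated free group onto G
  let f : FreeGroup S →* G := FreeGroup.lift Subtype.val
  have hf : Function.Surjective f := by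
    rw [← MonoidHom.range_eq_top, FreeGroup.range_lift_eq_closure]
    simpa [Subtype.range_coe] using hS
  let φ : FreeGroup S →* Q := π.comp f
  have hφ : Function.Surjective φ := (QuotientGroup.mk'_surjective N).comp hf
  -- the presentation map
  let mkP : FreeGroup (Fin n) →* PresentedGroup (rels : Set (FreeGroup (Fin n))) :=
    PresentedGroup.mk _
  let p : FreeGroup (Fin n) →* Q := e.toMonoidHom.comp mkP
  have hp : Function.Surjective p := e.surjective.comp (PresentedGroup.mk_surjective _)
  -- lift the presentation generators along φ
  choose w hw using fun i : Fin n => hφ (p (FreeGroup.of i))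
  let α : FreeGroup (Fin n) →* FreeGroup S := FreeGroup.lift w
  have hφα : ∀ x, φ (α x) = p x := by
    intro x
    have : φ.comp α = p := FreeGroup.ext_hom _ _ (by
      intro i
      simp only [MonoidHom.comp_apply]
      simpa [α] using hw i)
    exact DFunLike.congr_fun this x
  -- express each generator of G modulo N in terms of the presentation generators
  choose u hu using fun s : S => hp (φ (FreeGroup.of s))
  -- the finite set normally generating ker φ
  let t : S → FreeGroup S := fun s => (FreeGroup.of s)⁻¹ * α (u s)
  let T : Set (FreeGroup S) := (α '' (rels : Set (FreeGroup (Fin n)))) ∪ Set.range t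
  have hTfin : T.Finite := (rels.finite_toSet.image α).union (Set.finite_range t)
  have hT_ker : T ⊆ (MonoidHom.ker φ : Set (FreeGroup S)) := by
    rintro x (⟨r, hr, rfl⟩ | ⟨s, rfl⟩)
    · have hr1 : mkP r = 1 := by
        have : r ∈ Subgroup.normalClosure (rels : Set (FreeGroup (Fin n))) :=
          Subgroup.subset_normalClosure hr
        exact (QuotientGroup.eq_one_iff r).mpr this
      have : p r = 1 := by simp [p, hr1]
      simp [SetLike.mem_coe, MonoidHom.mem_ker, hφα, this]
    · simp [SetLike.mem_coe, MonoidHom.mem_ker, t, hφα, hu s]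
  set K : Subgroup (FreeGroup S) := Subgroup.normalClosure T with hK
  have hK_le : K ≤ MonoidHom.ker φ := Subgroup.normalClosure_le_normal hT_ker
  -- the induced map PresentedGroup rels →* FreeGroup S ⧸ K
  let q : FreeGroup S →* FreeGroup S ⧸ K := QuotientGroup.mk' K
  have hrels : ∀ r ∈ (rels : Set (FreeGroup (Fin n))), FreeGroup.lift (fun i => q (w i)) r = 1 := by
    intro r hr
    have hlift : FreeGroup.lift (fun i => q (w i)) = q.comp α := by
      apply FreeGroup.ext_hom
      intro i
      simp [α]
    rw [hlift]
    have : α r ∈ K := Subgroup.subset_normalClosure (Or.inl ⟨r, hr, rfl⟩)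
    simpa [MonoidHom.comp_apply, q, QuotientGroup.eq_one_iff] using
      (QuotientGroup.eq_one_iff (α r)).mpr this
  let ψ₀ : PresentedGroup (rels : Set (FreeGroup (Fin n))) →* FreeGroup S ⧸ K :=
    PresentedGroup.toGroup hrels
  have hψ₀ : ∀ x : FreeGroup (Fin n), ψ₀ (mkP x) = q (α x) := by
    intro x
    show (ψ₀.comp mkP) x = (q.comp α) x
    have : ψ₀.comp mkP = q.comp α := FreeGroup.ext_hom _ _ (by
      intro i
      have h1 : ψ₀ (mkP (FreeGroup.of i)) = q (w i) := PresentedGroup.toGroup.of hrels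
      simp only [MonoidHom.comp_apply]
      rw [h1]
      simp [α])
    rw [this]
  let ψ : Q →* FreeGroup S ⧸ K := ψ₀.comp e.symm.toMonoidHom
  have key : ∀ x : FreeGroup S, ψ (φ x) = q x := by
    intro x
    have : ψ.comp φ = q := FreeGroup.ext_hom _ _ (by
      intro s
      have h1 : ψ (φ (FreeGroup.of s)) = ψ (p (u s)) := by rw [hu s]
      have h2 : ψ (p (u s)) = ψ₀ (mkP (u s)) := by
        simp [ψ, p, MonoidHom.comp_apply]
      have h3 : q (α (u s)) = q (FreeGroup.of s) := by
        have hmem : (FreeGroup.of s)⁻¹ * α (u s) ∈ K :=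
          Subgroup.subset_normalClosure (Or.inr ⟨s, rfl⟩)
        exact ((QuotientGroup.eq ).mpr hmem).symm
      simp only [MonoidHom.comp_apply]
      rw [h1, h2, hψ₀, h3])
    exact DFunLike.congr_fun this x
  have hker_le : MonoidHom.ker φ ≤ K := by
    intro x hx
    have : q x = 1 := by
      rw [← key x, MonoidHom.mem_ker.mp hx, map_one]
    exact (QuotientGroup.eq_one_iff x).mp this
  have hkerφ : MonoidHom.ker φ = K := le_antisymm hker_le hK_le
  -- N is the image of ker φ
  have hNmap : Subgroup.map f (MonoidHom.ker φ) = N := by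
    apply le_antisymm
    · rintro x ⟨y, hy, rfl⟩
      have : π (f y) = 1 := MonoidHom.mem_ker.mp hy
      exact (QuotientGroup.eq_one_iff (f y)).mp this
    · intro x hx
      obtain ⟨y, rfl⟩ := hf x
      refine ⟨y, ?_, rfl⟩
      have : π (f y) = 1 := (QuotientGroup.eq_one_iff (f y)).mpr hx
      exact MonoidHom.mem_ker.mpr this
  have hNnc : N = Subgroup.normalClosure (f '' T) := by
    rw [← hNmap, hkerφ, hK, Subgroup.map_normalClosure T f hf]
  -- since f '' T ⊆ N ≤ center, normal closure = closure
  have hsub : f '' T ⊆ (Subgroup.center G : Set G) := by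
    intro x hx
    obtain ⟨y, hy, rfl⟩ := hx
    have : f y ∈ N := by
      have hyk : y ∈ MonoidHom.ker φ := hT_ker hy
      have : π (f y) = 1 := MonoidHom.mem_ker.mp hyk
      exact (QuotientGroup.eq_one_iff (f y)).mp this
    exact hN this
  have hnorm : (Subgroup.closure (f '' T)).Normal := by
    constructor
    intro x hx g
    have hxc : x ∈ Subgroup.center G := (Subgroup.closure_le _).mpr hsub hx
    have hr : g * x * g⁻¹ = x := by
      rw [Subgroup.mem_center_iff.mp hxc g]
      group
    rwa [hr]
  have hnc_eq : Subgroup.normalClosure (f '' T) = Subgroup.closure (f '' T) := by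
    apply le_antisymm
    · exact @Subgroup.normalClosure_le_normal _ _ _ _ hnorm Subgroup.subset_closure
    · exact Subgroup.closure_le_normalClosure
  rw [Subgroup.fg_iff]
  exact ⟨f '' T, by rw [hNnc, hnc_eq], hTfin.image f⟩
end

section
/- Let G = M *_K A be an amalgamated free product where A is abelian and K is a common subgroup of M and A. If G is finitely generated, then M is finitely generated. -/
universe u

/-- The two-element family `{M, A}` indexed by `Bool`. -/
def twoFam (M A : Type u) : Bool → Type u
  | true => M
  | false => A

instance twoFamGroup {M A : Type u} [Group M] [Group A] : ∀ b, Group (twoFam M A b)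
  | true => ‹Group M›
  | false => ‹Group A›

/-- The pair of injections `K → M`, `K → A` as a family of homomorphisms. -/
def twoHom {K : Type*} {M A : Type u} [Group K] [Group M] [Group A]
    (kM : K →* M) (kA : K →* A) : ∀ b, K →* twoFam M A b
  | true => kM
  | false => kA

section Aux

variable {K : Type*} {M A : Type u} [Group K] [Group M] [CommGroup A]

/-- The canonical map `M →* M *_K A`. -/
private abbrev oM (kM : K →* M) (kA : K →* A) : M →* Monoid.PushoutI (twoHom kM kA) :=
  Monoid.PushoutI.of (φ := twoHom kM kA) true

/-- The canonical map `A →* M *_K A`. -/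
private abbrev oA (kM : K →* M) (kA : K →* A) : A →* Monoid.PushoutI (twoHom kM kA) :=
  Monoid.PushoutI.of (φ := twoHom kM kA) false

variable (kM : K →* M) (kA : K →* A)

private theorem hphi (hM : Function.Injective ⇑kM) (hA : Function.Injective ⇑kA) :
    ∀ i, Function.Injective ⇑(twoHom kM kA i)
  | true => hM
  | false => hA

private theorem oA_eq_oM (k : K) : oA kM kA (kA k) = oM kM kA (kM k) :=
  (Monoid.PushoutI.of_apply_eq_base (twoHom kM kA) false k).trans
    (Monoid.PushoutI.of_apply_eq_base (twoHom kM kA) true k).symm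

/-- `wp [(b₁,u₁),…,(bᵣ,uᵣ)] = oA b₁ * oM u₁ * ⋯ * oA bᵣ * oM uᵣ`. -/
private def wp (L : List (A × M)) : Monoid.PushoutI (twoHom kM kA) :=
  (L.map fun p => oA kM kA p.1 * oM kM kA p.2).prod

private theorem wp_nil : wp kM kA ([] : List (A × M)) = 1 := by simp [wp]

private theorem wp_cons (p : A × M) (L : List (A × M)) :
    wp kM kA (p :: L) = oA kM kA p.1 * oM kM kA p.2 * wp kM kA L := by
  simp [wp, mul_assoc]

private theorem wp_append (L₁ L₂ : List (A × M)) :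
    wp kM kA (L₁ ++ L₂) = wp kM kA L₁ * wp kM kA L₂ := by
  simp [wp]

private theorem wp_mulM (L : List (A × M)) (q : A × M) (v : M) :
    wp kM kA (L ++ [q]) * oM kM kA v = wp kM kA (L ++ [(q.1, q.2 * v)]) := by
  simp only [wp_append, wp_cons, wp_nil, map_mul, mul_one, mul_assoc]

private theorem key (k : K) (b₁ b₂ : A) :
    oA kM kA b₁ * oM kM kA (kM k) * oA kM kA b₂ =
      oA kM kA (b₁ * b₂) * oM kM kA (kM k) := by
  rw [← oA_eq_oM kM kA k, ← map_mul, ← map_mul, ← map_mul, mul_right_comm]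

private theorem key2 (k : K) (b₁ b₂ : A) (u₂ : M) (g : Monoid.PushoutI (twoHom kM kA)) :
    oA kM kA b₁ * oM kM kA (kM k) * (oA kM kA b₂ * oM kM kA u₂ * g) =
      oA kM kA (b₁ * b₂) * oM kM kA (kM k * u₂) * g := by
  calc oA kM kA b₁ * oM kM kA (kM k) * (oA kM kA b₂ * oM kM kA u₂ * g)
      = oA kM kA b₁ * oM kM kA (kM k) * oA kM kA b₂ * oM kM kA u₂ * g := by
        simp only [mul_assoc]
    _ = oA kM kA (b₁ * b₂) * oM kM kA (kM k) * oM kM kA u₂ * g := by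
        rw [key kM kA k b₁ b₂]
    _ = oA kM kA (b₁ * b₂) * oM kM kA (kM k * u₂) * g := by
        rw [map_mul (oM kM kA) (kM k) u₂]
        simp only [mul_assoc]

/-! ### Words and letters for the reduced-word argument -/

private def lets (L : List (A × M)) : List ((i : Bool) × twoFam M A i) :=
  L.flatMap fun p => [⟨false, p.1⟩, ⟨true, p.2⟩]

private theorem lets_nil : lets ([] : List (A × M)) = [] := rfl

private theorem lets_cons (p : A × M) (L : List (A × M)) :
    lets (p :: L) = ⟨false, p.1⟩ :: ⟨true, p.2⟩ :: lets L := rfl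

private theorem lets_mem {L : List (A × M)} {l : (i : Bool) × twoFam M A i}
    (hl : l ∈ lets L) :
    (∃ p ∈ L, l = ⟨false, p.1⟩) ∨ (∃ p ∈ L, l = ⟨true, p.2⟩) := by
  obtain ⟨p, hp, h⟩ := List.mem_flatMap.mp hl
  rcases List.mem_cons.mp h with rfl | h
  · exact Or.inl ⟨p, hp, rfl⟩
  · rcases List.mem_singleton.mp h with rfl
    exact Or.inr ⟨p, hp, rfl⟩

private theorem lets_head {L : List (A × M)} {tail : List ((i : Bool) × twoFam M A i)}
    (h : ∀ l ∈ tail.head?, l.1 = false) :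
    ∀ l ∈ (lets L ++ tail).head?, l.1 = false := by
  cases L with
  | nil => simpa [lets_nil]
  | cons p L =>
    intro l hl
    rw [lets_cons, List.cons_append, List.head?_cons, Option.mem_some_iff] at hl
    subst hl; rfl

private theorem lets_chain {L : List (A × M)} {tail : List ((i : Bool) × twoFam M A i)}
    (hc : tail.Chain' fun l l' => l.1 ≠ l'.1) (h : ∀ l ∈ tail.head?, l.1 = false) :
    (lets L ++ tail).Chain' fun l l' => l.1 ≠ l'.1 := by
  induction L with
  | nil => simpa [lets_nil]
  | cons p L ih =>
    rw [lets_cons, List.cons_append, List.cons_append]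
    refine List.isChain_cons.mpr ⟨?_, List.isChain_cons.mpr ⟨?_, ih⟩⟩
    · intro l hl
      rw [List.head?_cons, Option.mem_some_iff] at hl
      subst hl
      simp
    · intro l hl
      have := lets_head (L := L) h l hl
      simp [this]

private theorem lets_prod (L : List (A × M)) :
    ((lets L).map fun l => Monoid.PushoutI.of (φ := twoHom kM kA) l.1 l.2).prod
      = wp kM kA L := by
  induction L with
  | nil => simp [lets_nil, wp_nil]
  | cons p L ih =>
    rw [lets_cons]
    simp only [List.map_cons, List.prod_cons, wp_cons, ih, mul_assoc]
    rfl

private theorem ofCoprodI_listProd (lst : List ((i : Bool) × twoFam M A i)) :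
    Monoid.PushoutI.ofCoprodI (φ := twoHom kM kA)
        ((lst.map fun l => Monoid.CoprodI.of l.2).prod) =
      (lst.map fun l => Monoid.PushoutI.of (φ := twoHom kM kA) l.1 l.2).prod := by
  induction lst with
  | nil => simp
  | cons l lst ih =>
    simp only [List.map_cons, List.prod_cons, map_mul, ih,
      Monoid.PushoutI.ofCoprodI_of]

private theorem word_eq_nil (hM : Function.Injective ⇑kM) (hA : Function.Injective ⇑kA)
    (lst : List ((i : Bool) × twoFam M A i))
    (hred : ∀ l ∈ lst, l.2 ∉ (twoHom kM kA l.1).range)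
    (hchain : lst.Chain' fun l l' => l.1 ≠ l'.1)
    (hmem : (lst.map fun l => Monoid.PushoutI.of (φ := twoHom kM kA) l.1 l.2).prod ∈
      (Monoid.PushoutI.base (twoHom kM kA)).range) :
    lst = [] := by
  have hne : ∀ l ∈ lst, l.2 ≠ 1 := fun l hl h1 =>
    hred l hl ⟨1, by rw [map_one, h1]⟩
  let w : Monoid.CoprodI.Word (twoFam M A) := ⟨lst, hne, hchain⟩
  have h2 : Monoid.PushoutI.ofCoprodI (φ := twoHom kM kA) w.prod ∈
      (Monoid.PushoutI.base (twoHom kM kA)).range := by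
    have h3 : Monoid.PushoutI.ofCoprodI (φ := twoHom kM kA) w.prod =
        (lst.map fun l => Monoid.PushoutI.of (φ := twoHom kM kA) l.1 l.2).prod :=
      ofCoprodI_listProd kM kA lst
    rw [h3]; exact hmem
  have hemp : w = Monoid.CoprodI.Word.empty :=
    Monoid.PushoutI.Reduced.eq_empty_of_mem_range (hphi kM kA hM hA) hred h2
  have := congrArg Monoid.CoprodI.Word.toList hemp
  simpa using this

/-- The key normal form fact: a nonempty fully reduced alternating word cannot
represent an element of `M`. -/
private theorem not_reduced_rep (hM : Function.Injective ⇑kM) (hA : Function.Injective ⇑kA)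
    {L : List (A × M)} (hne : L ≠ [])
    (hb : ∀ p ∈ L, p.1 ∉ kA.range) (hu : ∀ p ∈ L.dropLast, p.2 ∉ kM.range)
    {m : M} (hm : oM kM kA m = wp kM kA L) : False := by
  obtain ⟨L', q, rfl⟩ := (List.eq_nil_or_concat L).resolve_left hne
  simp only [List.concat_eq_append] at hne hb hu hm
  rw [List.dropLast_concat] at hu
  have hq : q ∈ L' ++ [q] := by simp
  have hx : oM kM kA (m * q.2⁻¹) = wp kM kA L' * oA kM kA q.1 := by
    rw [map_mul, map_inv, hm, wp_append, wp_cons, wp_nil, mul_one, mul_assoc,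
      mul_inv_cancel_right]
  have hbL' : ∀ p ∈ L', p.1 ∉ kA.range := fun p hp =>
    hb p (List.mem_append_left _ hp)
  have huL' : ∀ p ∈ L', p.2 ∉ kM.range := hu
  by_cases hxr : m * q.2⁻¹ ∈ kM.range
  · obtain ⟨k, hk⟩ := hxr
    have h0 := word_eq_nil kM kA hM hA (lets L' ++ [⟨false, q.1⟩]) ?_ ?_ ?_
    · simpa using h0
    · intro l hl
      rcases List.mem_append.mp hl with hl | hl
      · rcases lets_mem hl with ⟨p, hp, rfl⟩ | ⟨p, hp, rfl⟩
        · exact hbL' p hp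
        · exact huL' p hp
      · rcases List.mem_singleton.mp hl with rfl
        exact hb q hq
    · exact lets_chain (List.isChain_singleton _) (by intro l hl; simp at hl; subst hl; rfl)
    · refine ⟨k, ?_⟩
      have hbase : Monoid.PushoutI.base (twoHom kM kA) k = oM kM kA (kM k) :=
        (Monoid.PushoutI.of_apply_eq_base (twoHom kM kA) true k).symm
      rw [hbase, hk, hx, List.map_append, List.prod_append, lets_prod]
      simp only [List.map_cons, List.map_nil, List.prod_cons, List.prod_nil, mul_one]
      rfl
  · have h0 := word_eq_nil kM kA hM hA
      (lets L' ++ [⟨false, q.1⟩, ⟨true, (m * q.2⁻¹)⁻¹⟩]) ?_ ?_ ?_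
    · simpa using h0
    · intro l hl
      rcases List.mem_append.mp hl with hl | hl
      · rcases lets_mem hl with ⟨p, hp, rfl⟩ | ⟨p, hp, rfl⟩
        · exact hbL' p hp
        · exact huL' p hp
      · rcases List.mem_cons.mp hl with rfl | hl
        · exact hb q hq
        · rcases List.mem_singleton.mp hl with rfl
          rintro ⟨k, hk⟩
          refine hxr ⟨k⁻¹, ?_⟩
          rw [map_inv, show kM k = (m * q.2⁻¹)⁻¹ from hk, inv_inv]
    · refine lets_chain ?_ (by intro l hl; simp at hl; subst hl; rfl)
      refine List.isChain_cons.mpr ⟨?_, List.isChain_singleton _⟩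
      intro l hl
      simp at hl; subst hl; simp
    · refine ⟨1, ?_⟩
      rw [map_one, List.map_append, List.prod_append, lets_prod]
      simp only [List.map_cons, List.map_nil, List.prod_cons, List.prod_nil, mul_one]
      rw [← mul_assoc]
      rw [show wp kM kA L' * Monoid.PushoutI.of (φ := twoHom kM kA) false q.1 =
        oM kM kA (m * q.2⁻¹) from hx.symm]
      rw [show Monoid.PushoutI.of (φ := twoHom kM kA) true (m * q.2⁻¹)⁻¹ =
        oM kM kA (m * q.2⁻¹)⁻¹ from rfl]
      rw [← map_mul, mul_inv_cancel, map_one]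

/-! ### Every element of the subgroup generated by `M₀` and `B` has a representation -/

private theorem rep_mul_gen {B : Subgroup A} {M₀ : Subgroup M}
    {x y : Monoid.PushoutI (twoHom kM kA)}
    (hx : ∃ u₀ L, u₀ ∈ M₀ ∧ (∀ p ∈ L, p.1 ∈ B ∧ p.2 ∈ M₀) ∧
      x = oM kM kA u₀ * wp kM kA L)
    (hy : y ∈ oM kM kA '' (M₀ : Set M) ∪ oA kM kA '' (B : Set A)) :
    ∃ u₀ L, u₀ ∈ M₀ ∧ (∀ p ∈ L, p.1 ∈ B ∧ p.2 ∈ M₀) ∧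
      x * y = oM kM kA u₀ * wp kM kA L := by
  obtain ⟨u₀, L, hu, hL, rfl⟩ := hx
  rcases hy with ⟨v, hv, rfl⟩ | ⟨b, hb, rfl⟩
  · rcases List.eq_nil_or_concat L with rfl | ⟨L', q, rfl⟩
    · exact ⟨u₀ * v, [], mul_mem hu hv, by simp, by simp [wp_nil, map_mul]⟩
    · simp only [List.concat_eq_append] at hL ⊢
      refine ⟨u₀, L' ++ [(q.1, q.2 * v)], hu, ?_, ?_⟩
      · intro r hr
        rcases List.mem_append.mp hr with hr | hr
        · exact hL r (List.mem_append_left _ hr)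
        · rcases List.mem_singleton.mp hr with rfl
          exact ⟨(hL q (by simp)).1, mul_mem (hL q (by simp)).2 hv⟩
      · rw [mul_assoc, wp_mulM]
  · refine ⟨u₀, L ++ [(b, 1)], hu, ?_, ?_⟩
    · intro r hr
      rcases List.mem_append.mp hr with hr | hr
      · exact hL r hr
      · rcases List.mem_singleton.mp hr with rfl
        exact ⟨hb, one_mem _⟩
    · simp [wp_append, wp_cons, wp_nil, mul_assoc]

private theorem genset_inv {B : Subgroup A} {M₀ : Subgroup M}
    {y : Monoid.PushoutI (twoHom kM kA)}
    (hy : y ∈ oM kM kA '' (M₀ : Set M) ∪ oA kM kA '' (B : Set A)) :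
    y⁻¹ ∈ oM kM kA '' (M₀ : Set M) ∪ oA kM kA '' (B : Set A) := by
  rcases hy with ⟨v, hv, rfl⟩ | ⟨b, hb, rfl⟩
  · exact Or.inl ⟨v⁻¹, inv_mem hv, by rw [map_inv]⟩
  · exact Or.inr ⟨b⁻¹, inv_mem hb, by rw [map_inv]⟩

private theorem rep_of_mem {B : Subgroup A} {M₀ : Subgroup M}
    {g : Monoid.PushoutI (twoHom kM kA)}
    (hg : g ∈ Subgroup.closure (oM kM kA '' (M₀ : Set M) ∪ oA kM kA '' (B : Set A))) :
    ∃ u₀ L, u₀ ∈ M₀ ∧ (∀ p ∈ L, p.1 ∈ B ∧ p.2 ∈ M₀) ∧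
      g = oM kM kA u₀ * wp kM kA L := by
  induction hg using Subgroup.closure_induction_right with
  | one => exact ⟨1, [], one_mem _, by simp, by simp [wp_nil]⟩
  | mul_right x hx y hy ih => exact rep_mul_gen kM kA ih hy
  | mul_inv_cancel x hx y hy ih => exact rep_mul_gen kM kA ih (genset_inv kM kA hy)

/-! ### The main reduction induction -/

private theorem mem_of_rep (hM : Function.Injective ⇑kM) (hA : Function.Injective ⇑kA)
    {B : Subgroup A} {M₀ : Subgroup M}
    (hKB : ∀ k : K, kA k ∈ B → kM k ∈ M₀) :
    ∀ (n : ℕ) (L : List (A × M)) (u₀ m : M), L.length ≤ n → u₀ ∈ M₀ →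
      (∀ p ∈ L, p.1 ∈ B ∧ p.2 ∈ M₀) →
      oM kM kA m = oM kM kA u₀ * wp kM kA L → m ∈ M₀ := by
  intro n
  induction n with
  | zero =>
    intro L u₀ m hlen hu _ heq
    have hL0 : L = [] := List.length_eq_zero_iff.mp (Nat.le_zero.mp hlen)
    subst hL0
    rw [wp_nil, mul_one] at heq
    have := Monoid.PushoutI.of_injective (hphi kM kA hM hA) true heq
    exact this.symm ▸ hu
  | succ n ih =>
    intro L u₀ m hlen hu hL heq
    rcases eq_or_ne L [] with rfl | hne
    · rw [wp_nil, mul_one] at heq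
      have := Monoid.PushoutI.of_injective (hphi kM kA hM hA) true heq
      exact this.symm ▸ hu
    by_cases hcl : ∀ p ∈ L, p.1 ∉ kA.range
    · by_cases hcl2 : ∀ p ∈ L.dropLast, p.2 ∉ kM.range
      · exfalso
        apply not_reduced_rep kM kA hM hA hne hcl hcl2 (m := u₀⁻¹ * m)
        rw [map_mul, heq, map_inv, ← mul_assoc, inv_mul_cancel, one_mul]
      · push_neg at hcl2
        obtain ⟨p, hp, hpr⟩ := hcl2
        obtain ⟨k, hk⟩ := hpr
        obtain ⟨s, t, hst⟩ := List.append_of_mem hp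
        have hLfull : L = s ++ p :: (t ++ [L.getLast hne]) := by
          conv_lhs => rw [← List.dropLast_append_getLast hne]
          rw [hst]
          simp
        obtain ⟨q₂, rest, hL2⟩ : ∃ q₂ rest, L = s ++ p :: q₂ :: rest := by
          cases t with
          | nil => exact ⟨L.getLast hne, [], by simpa using hLfull⟩
          | cons a t' => exact ⟨a, t' ++ [L.getLast hne], by simpa using hLfull⟩
        have hpL : p ∈ L := List.dropLast_subset L hp
        have hq2 : q₂ ∈ L := by rw [hL2]; simp
        have e : wp kM kA L = wp kM kA (s ++ (p.1 * q₂.1, kM k * q₂.2) :: rest) := by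
          rw [hL2]
          simp only [wp_append, wp_cons]
          rw [← hk, key2 kM kA k p.1 q₂.1 q₂.2 (wp kM kA rest)]
        refine ih (s ++ (p.1 * q₂.1, kM k * q₂.2) :: rest) u₀ m ?_ hu ?_ ?_
        · have hlen2 := congrArg List.length hL2
          simp only [List.length_append, List.length_cons] at hlen2 hlen ⊢
          omega
        · intro r hr
          rcases List.mem_append.mp hr with hr | hr
          · exact hL r (by rw [hL2]; exact List.mem_append_left _ hr)
          · rcases List.mem_cons.mp hr with rfl | hr
            · exact ⟨mul_mem (hL p hpL).1 (hL q₂ hq2).1,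
                mul_mem (hk.symm ▸ (hL p hpL).2) (hL q₂ hq2).2⟩
            · exact hL r (by rw [hL2]; simp [hr])
        · rw [heq, e]
    · push_neg at hcl
      obtain ⟨p, hp, hpr⟩ := hcl
      obtain ⟨k, hk⟩ := hpr
      obtain ⟨L₁, L₂, hL1⟩ := List.append_of_mem hp
      have hkB : kM k ∈ M₀ := hKB k (by rw [hk]; exact (hL p hp).1)
      rcases List.eq_nil_or_concat L₁ with rfl | ⟨L₁', q, rfl⟩
      · have e : oM kM kA u₀ * wp kM kA L =
            oM kM kA (u₀ * (kM k * p.2)) * wp kM kA L₂ := by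
          rw [hL1, List.nil_append, wp_cons, ← hk, oA_eq_oM kM kA k,
            map_mul (oM kM kA) u₀, map_mul (oM kM kA) (kM k)]
          simp only [mul_assoc]
        refine ih L₂ (u₀ * (kM k * p.2)) m ?_
          (mul_mem hu (mul_mem hkB (hL p hp).2)) ?_ (heq.trans e)
        · have hlen2 := congrArg List.length hL1
          simp only [List.length_append, List.length_cons, List.length_nil] at hlen2 hlen ⊢
          omega
        · intro r hr
          exact hL r (by rw [hL1]; simp [hr])
      · simp only [List.concat_eq_append] at hL1
        have e0 : wp kM kA L = wp kM kA (L₁' ++ (q.1, q.2 * (kM k * p.2)) :: L₂) := by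
          rw [hL1, wp_append, wp_cons, ← hk, oA_eq_oM kM kA k, ← map_mul,
            ← mul_assoc, wp_mulM, ← wp_append,
            show L₁' ++ [(q.1, q.2 * (kM k * p.2))] ++ L₂ =
              L₁' ++ (q.1, q.2 * (kM k * p.2)) :: L₂ by simp]
        refine ih (L₁' ++ (q.1, q.2 * (kM k * p.2)) :: L₂) u₀ m ?_ hu ?_ ?_
        · have hlen2 := congrArg List.length hL1
          simp only [List.length_append, List.length_cons] at hlen2 hlen ⊢
          omega
        · intro r hr
          have hqL : q ∈ L := by rw [hL1]; simp
          rcases List.mem_append.mp hr with hr | hr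
          · exact hL r (by rw [hL1]; simp [hr])
          · rcases List.mem_cons.mp hr with rfl | hr
            · exact ⟨(hL q hqL).1,
                mul_mem (hL q hqL).2 (mul_mem hkB (hL p hp).2)⟩
            · exact hL r (by rw [hL1]; simp [hr])
        · rw [heq, e0]

/-! ### Finite generation transfer lemmas -/

private theorem fg_of_mulEquiv {G₁ G₂ : Type*} [Group G₁] [Group G₂] (e : G₁ ≃* G₂)
    (h : Group.FG G₁) : Group.FG G₂ := by
  haveI := h
  exact Group.fg_of_surjective (f := e.toMonoidHom) e.surjective

private theorem subgroup_fg_sup {G : Type*} [Group G] {H₁ H₂ : Subgroup G}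
    (h1 : H₁.FG) (h2 : H₂.FG) : (H₁ ⊔ H₂).FG := by
  obtain ⟨S₁, rfl⟩ := h1
  obtain ⟨S₂, rfl⟩ := h2
  classical
  exact ⟨S₁ ∪ S₂, by rw [Finset.coe_union, Subgroup.closure_union]⟩

private theorem subgroup_fg_map {G H : Type*} [Group G] [Group H] {P : Subgroup G}
    (h : P.FG) (f : G →* H) : (P.map f).FG := by
  obtain ⟨S, rfl⟩ := h
  classical
  exact ⟨S.image f, by rw [Finset.coe_image, MonoidHom.map_closure]⟩

/-- A subgroup contained in a finitely generated subgroup of an abelian group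
is finitely generated. -/
private theorem fg_of_le_fg {A : Type*} [CommGroup A] {B C : Subgroup A}
    (hB : B.FG) (hCB : C ≤ B) : C.FG := by
  haveI hgB : Group.FG ↥B := (Group.fg_iff_subgroup_fg B).mpr hB
  haveI : AddGroup.FG (Additive ↥B) := GroupFG.iff_add_fg.mp hgB
  haveI : Module.Finite ℤ (Additive ↥B) := Module.Finite.iff_addGroup_fg.mpr ‹_›
  have hsm : (AddSubgroup.toIntSubmodule ((C.subgroupOf B).toAddSubgroup)).FG :=
    IsNoetherian.noetherian _
  have hts : (AddSubgroup.toIntSubmodule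
      ((C.subgroupOf B).toAddSubgroup)).toAddSubgroup = (C.subgroupOf B).toAddSubgroup := by
    ext x
    simp
  have h1 : ((C.subgroupOf B).toAddSubgroup).FG := by
    have := (Submodule.fg_iff_addSubgroup_fg
      (AddSubgroup.toIntSubmodule ((C.subgroupOf B).toAddSubgroup))).mp hsm
    rwa [hts] at this
  have h2 : (C.subgroupOf B).FG := (Subgroup.fg_iff_add_fg _).mpr h1
  haveI : Group.FG ↥(C.subgroupOf B) := (Group.fg_iff_subgroup_fg _).mpr h2
  have := fg_of_mulEquiv (Subgroup.subgroupOfEquivOfLe hCB) ‹_›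
  exact (Group.fg_iff_subgroup_fg C).mp this

end Aux

/-- If `G = M *_K A` is an amalgamated free product with `A` abelian and `G`
finitely generated, then `M` is finitely generated. -/
theorem stmt10 {K : Type*} {M A : Type u} [Group K] [Group M] [CommGroup A]
    (kM : K →* M) (kA : K →* A)
    (hM : Function.Injective kM) (hA : Function.Injective kA)
    (hfg : Group.FG (Monoid.PushoutI (twoHom kM kA))) :
    Group.FG M := by
  classical
  obtain ⟨S, hS⟩ := Group.fg_def.mp hfg
  set F : Finset M × Finset A → Subgroup (Monoid.PushoutI (twoHom kM kA)) :=
    fun T => Subgroup.closure (oM kM kA '' (↑T.1 : Set M) ∪ oA kM kA '' (↑T.2 : Set A))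
    with hF
  have hmono : Monotone F := fun T T' h => Subgroup.closure_mono
    (Set.union_subset_union (Set.image_mono (Finset.coe_subset.mpr h.1))
      (Set.image_mono (Finset.coe_subset.mpr h.2)))
  have hdir : Directed (· ≤ ·) F := hmono.directed_le
  have hsup : ∀ g : Monoid.PushoutI (twoHom kM kA), g ∈ ⨆ T, F T := by
    intro g
    induction g using Monoid.PushoutI.induction_on with
    | of i g =>
      cases i with
      | true =>
        exact (le_iSup F (({g} : Finset M), (∅ : Finset A)))
          (Subgroup.subset_closure (Or.inl ⟨g, Finset.mem_coe.mpr (Finset.mem_singleton_self _), rfl⟩))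
      | false =>
        exact (le_iSup F ((∅ : Finset M), ({g} : Finset A)))
          (Subgroup.subset_closure (Or.inr ⟨g, Finset.mem_coe.mpr (Finset.mem_singleton_self _), rfl⟩))
    | base h =>
      have hb : Monoid.PushoutI.base (twoHom kM kA) h = oM kM kA (kM h) :=
        (Monoid.PushoutI.of_apply_eq_base (twoHom kM kA) true h).symm
      rw [hb]
      exact (le_iSup F (({kM h} : Finset M), (∅ : Finset A)))
        (Subgroup.subset_closure (Or.inl ⟨kM h, by simp, rfl⟩))
    | mul x y hx hy => exact mul_mem hx hy
  have hchoice : ∀ g : Monoid.PushoutI (twoHom kM kA), ∃ T, g ∈ F T := fun g =>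
    (Subgroup.mem_iSup_of_directed hdir).mp (hsup g)
  set T₀ : Finset M × Finset A := S.sup fun s => (hchoice s).choose with hT₀
  have hST : ∀ s ∈ S, s ∈ F T₀ := fun s hs =>
    hmono (Finset.le_sup hs) (hchoice s).choose_spec
  have htop : ∀ g, g ∈ F T₀ := by
    intro g
    have hg : g ∈ Subgroup.closure (S : Set (Monoid.PushoutI (twoHom kM kA))) := by
      rw [hS]; trivial
    exact (Subgroup.closure_le (F T₀)).mpr hST hg
  set B : Subgroup A := Subgroup.closure ↑T₀.2 with hB
  set M' : Subgroup M := Subgroup.closure ↑T₀.1 with hM'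
  set M₀ : Subgroup M := M' ⊔ Subgroup.map kM (Subgroup.comap kA B) with hM₀
  have hKB : ∀ k : K, kA k ∈ B → kM k ∈ M₀ := fun k hk =>
    Subgroup.mem_sup_right ⟨k, hk, rfl⟩
  have hsub : F T₀ ≤
      Subgroup.closure (oM kM kA '' (M₀ : Set M) ∪ oA kM kA '' (B : Set A)) := by
    apply Subgroup.closure_mono
    apply Set.union_subset_union
    · apply Set.image_mono
      intro x hx
      exact Subgroup.mem_sup_left (Subgroup.subset_closure hx)
    · apply Set.image_mono
      exact Subgroup.subset_closure
  have hMtop : ∀ m : M, m ∈ M₀ := by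
    intro m
    obtain ⟨u₀, L, hu, hL, heq⟩ := rep_of_mem kM kA (hsub (htop (oM kM kA m)))
    exact mem_of_rep kM kA hM hA hKB L.length L u₀ m le_rfl hu hL heq
  have hM'fg : M'.FG := ⟨T₀.1, rfl⟩
  have hBfg : B.FG := ⟨T₀.2, rfl⟩
  have hmapA : (Subgroup.map kA (Subgroup.comap kA B)).FG :=
    fg_of_le_fg hBfg (by rw [Subgroup.map_comap_eq]; exact inf_le_right)
  haveI : Group.FG ↥(Subgroup.map kA (Subgroup.comap kA B)) :=
    (Group.fg_iff_subgroup_fg _).mpr hmapA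
  have hCfg : (Subgroup.comap kA B).FG :=
    (Group.fg_iff_subgroup_fg _).mp
      (fg_of_mulEquiv (Subgroup.equivMapOfInjective _ kA hA).symm ‹_›)
  have hmapM : (Subgroup.map kM (Subgroup.comap kA B)).FG := subgroup_fg_map hCfg kM
  have hM₀fg : M₀.FG := subgroup_fg_sup hM'fg hmapM
  have htopfg : (⊤ : Subgroup M).FG := by
    rwa [show (⊤ : Subgroup M) = M₀ from le_antisymm (fun m _ => hMtop m) le_top]
  exact Group.fg_def.mpr htopfg
end

section
/- Let K ≥ 1 and let G be a countable group such that every finitely generated subgroup of G contains an abelian subgroup of index at most K. Then G contains an abelian subgroup of index at most K. -/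
open Filter

/-- Pigeonhole: if every `(K+1)`-tuple in `Q` has a repetition, then `Q` is finite
with at most `K` elements. -/
lemma card_le_of_no_injective {Q : Type*} {K : ℕ}
    (hq : ∀ q : Fin (K + 1) → Q, ¬ Function.Injective q) :
    Finite Q ∧ Nat.card Q ≤ K := by
  have hfin : Finite Q := by
    by_contra hinf
    rw [not_finite_iff_infinite] at hinf
    exact hq (fun i => Infinite.natEmbedding Q i)
      ((Infinite.natEmbedding Q).injective.comp Fin.val_injective)
  refine ⟨hfin, ?_⟩
  by_contra hcard
  push_neg at hcard
  haveI : Fintype Q := Fintype.ofFinite Q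
  rw [Nat.card_eq_fintype_card] at hcard
  have hle : K + 1 ≤ Fintype.card Q := hcard
  refine hq (fun i => (Fintype.equivFin Q).symm ⟨i.val, lt_of_lt_of_le i.isLt hle⟩) ?_
  intro i j hij
  have := (Fintype.equivFin Q).symm.injective hij
  have hv : (i : ℕ) = (j : ℕ) := by simpa using this
  exact Fin.ext hv

/-- If `G` is countable and every finitely generated subgroup of `G` has an abelian
subgroup of index at most `K`, then so does `G`. -/
theorem stmt11 {G : Type*} [Group G] [Countable G] (K : ℕ) (hK : 1 ≤ K)
    (h : ∀ H : Subgroup G, H.FG →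
      ∃ B : Subgroup H, IsMulCommutative B ∧ B.index ≤ K ∧ B.index ≠ 0) :
    ∃ B : Subgroup G, IsMulCommutative B ∧ B.index ≤ K ∧ B.index ≠ 0 := by
  classical
  obtain ⟨f, hf⟩ := exists_surjective_nat G
  set H : ℕ → Subgroup G := fun n => Subgroup.closure (f '' {k | k < n}) with hHdef
  have hHfg : ∀ n, (H n).FG := fun n =>
    (Subgroup.fg_iff _).mpr ⟨f '' {k | k < n}, rfl, (Set.finite_lt_nat n).image f⟩
  choose B hBcomm hBle hBne using fun n => h (H n) (hHfg n)
  set C : ℕ → Subgroup G := fun n => (B n).map (H n).subtype with hCdef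
  set U : Ultrafilter ℕ := Filter.hyperfilter ℕ with hUdef
  have hUc : ∀ {s : Set ℕ}, s ∈ (Filter.cofinite : Filter ℕ) → s ∈ U :=
    fun hs => Filter.hyperfilter_le_cofinite hs
  have hmem : ∀ g : G, ∀ᶠ n in (U : Filter ℕ), g ∈ H n := by
    intro g
    obtain ⟨k, rfl⟩ := hf g
    apply hUc
    rw [Nat.cofinite_eq_atTop]
    filter_upwards [Filter.eventually_ge_atTop (k + 1)] with n hn
    exact Subgroup.subset_closure ⟨k, Nat.lt_of_succ_le hn, rfl⟩
  -- the limit subgroup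
  set D : Subgroup G :=
    { carrier := { g | ∀ᶠ n in (U : Filter ℕ), g ∈ C n }
      one_mem' := Filter.Eventually.of_forall fun n => one_mem (C n)
      mul_mem' := fun ha hb => (ha.and hb).mono fun n hn => mul_mem hn.1 hn.2
      inv_mem' := fun ha => ha.mono fun n hn => inv_mem hn } with hDdef
  have hDmem : ∀ g : G, g ∈ D ↔ ∀ᶠ n in (U : Filter ℕ), g ∈ C n := fun g => Iff.rfl
  -- key: among any K+1 elements, two lie in the same left coset of D
  have key : ∀ g : Fin (K + 1) → G, ∃ i j, i ≠ j ∧ (g i)⁻¹ * g j ∈ D := by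
    intro g
    have hall : ∀ᶠ n in (U : Filter ℕ), ∀ i, g i ∈ H n :=
      Filter.eventually_all.mpr fun i => hmem (g i)
    have hstep : ∀ᶠ n in (U : Filter ℕ),
        ∃ p : Fin (K + 1) × Fin (K + 1), p.1 ≠ p.2 ∧ (g p.1)⁻¹ * g p.2 ∈ C n := by
      refine hall.mono fun n hn => ?_
      haveI : Finite ((H n : Type _) ⧸ B n) := by
        have := hBne n
        rw [Subgroup.index] at this
        exact (Nat.card_ne_zero.mp this).2
      haveI : Fintype ((H n : Type _) ⧸ B n) := Fintype.ofFinite _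
      have hcard : Fintype.card ((H n : Type _) ⧸ B n) < Fintype.card (Fin (K + 1)) := by
        have := hBle n
        rw [Subgroup.index, Nat.card_eq_fintype_card] at this
        simpa using lt_of_le_of_lt this (Nat.lt_succ_self K)
      obtain ⟨i, j, hij, hq⟩ := Fintype.exists_ne_map_eq_of_card_lt
        (fun i : Fin (K + 1) => QuotientGroup.mk (s := B n) ⟨g i, hn i⟩) hcard
      rw [QuotientGroup.eq] at hq
      refine ⟨(i, j), hij, ?_⟩
      exact Subgroup.mem_map.mpr ⟨_, hq, rfl⟩
    -- pigeonhole over the ultrafilter: one pair works on a U-large set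
    have hset : (⋃ p ∈ (Set.univ : Set (Fin (K + 1) × Fin (K + 1))),
        {n | p.1 ≠ p.2 ∧ (g p.1)⁻¹ * g p.2 ∈ C n}) ∈ U := by
      refine Filter.mem_of_superset hstep ?_
      intro n hn
      obtain ⟨p, hp⟩ := hn
      exact Set.mem_biUnion (Set.mem_univ p) hp
    obtain ⟨p, -, hp⟩ := (Ultrafilter.finite_biUnion_mem_iff Set.finite_univ).mp hset
    have hpe : ∀ᶠ n in (U : Filter ℕ), p.1 ≠ p.2 ∧ (g p.1)⁻¹ * g p.2 ∈ C n :=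
      (Ultrafilter.mem_coe).mpr hp
    have hne : p.1 ≠ p.2 := by
      obtain ⟨n, hn⟩ := hpe.exists
      exact hn.1
    exact ⟨p.1, p.2, hne, (hDmem _).mpr (hpe.mono fun n hn => hn.2)⟩
  refine ⟨D, ?_, ?_, ?_⟩
  · -- commutativity
    refine ⟨⟨fun a b => ?_⟩⟩
    obtain ⟨n, hna, hnb⟩ := (a.2.and b.2).exists
    obtain ⟨a', ha', ha⟩ := Subgroup.mem_map.mp hna
    obtain ⟨b', hb', hb⟩ := Subgroup.mem_map.mp hnb
    have hcomm := (hBcomm n).is_comm.comm ⟨a', ha'⟩ ⟨b', hb'⟩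
    apply Subtype.ext
    have : (a : G) * b = (b : G) * a := by
      rw [← ha, ← hb]
      exact congrArg (fun x : B n => ((x : (H n : Type _)) : G)) hcomm
    simpa using this
  · -- index ≤ K
    have hninj : ∀ q : Fin (K + 1) → G ⧸ D, ¬ Function.Injective q := by
      intro q hq
      choose g hg using fun i => QuotientGroup.mk_surjective (q i)
      obtain ⟨i, j, hij, hmem'⟩ := key g
      refine hij (hq ?_)
      rw [← hg i, ← hg j, QuotientGroup.eq]
      exact hmem'
    have := (card_le_of_no_injective hninj).2
    rwa [Subgroup.index]
  · -- index ≠ 0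
    have hninj : ∀ q : Fin (K + 1) → G ⧸ D, ¬ Function.Injective q := by
      intro q hq
      choose g hg using fun i => QuotientGroup.mk_surjective (q i)
      obtain ⟨i, j, hij, hmem'⟩ := key g
      refine hij (hq ?_)
      rw [← hg i, ← hg j, QuotientGroup.eq]
      exact hmem'
    have hfin := (card_le_of_no_injective hninj).1
    rw [Subgroup.index]
    exact Nat.card_ne_zero.mpr ⟨⟨QuotientGroup.mk 1⟩, hfin⟩
end
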